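/- arXiv:1605.02470 — 3 statements merged into one kernel-verified Lean document; each statement's English description precedes it below -/
import Mathlib

section
/- Under the randomized Kaczmarz scheme, if λ_min ∈ (0,1), then for every n ≥ 0 the expected squared error satisfies E[‖e(n)‖²] ≤ (1 − λ_min)^n · ‖e(0)‖², so E[‖e(n)‖²] → 0 exponentially fast. -/
open scoped InnerProductSpace
open MeasureTheory

/-- The `i`-th row of a matrix, viewed as a vector of Euclidean space. -/
def Matrix.rowE {m n : ℕ} (A : Matrix (Fin m) (Fin n) ℝ) (i : Fin m) :
    EuclideanSpace ℝ (Fin n) := WithLp.toLp 2 (fun j => A i j)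

/-- The normalized `i`-th row of a matrix. -/
noncomputable def Matrix.nrowE {m n : ℕ} (A : Matrix (Fin m) (Fin n) ℝ) (i : Fin m) :
    EuclideanSpace ℝ (Fin n) := (‖A.rowE i‖)⁻¹ • A.rowE i

noncomputable def kacF {m n : ℕ} (A : Matrix (Fin m) (Fin n) ℝ) (b : Fin m → ℝ)
    (x0 : EuclideanSpace ℝ (Fin n)) : (k : ℕ) → (Fin k → Fin m) → EuclideanSpace ℝ (Fin n)
  | 0, _ => x0
  | (k+1), w =>
      kacF A b x0 k (w ∘ Fin.castSucc) +
        ((b (w (Fin.last k)) - ⟪A.rowE (w (Fin.last k)), kacF A b x0 k (w ∘ Fin.castSucc)⟫_ℝ) /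
          ‖A.rowE (w (Fin.last k))‖ ^ 2) • A.rowE (w (Fin.last k))

lemma rowE_inner {m n : ℕ} (A : Matrix (Fin m) (Fin n) ℝ) (i : Fin m)
    (x : EuclideanSpace ℝ (Fin n)) : ⟪A.rowE i, x⟫_ℝ = A.mulVec x i := by
  simp [Matrix.rowE, Matrix.mulVec, dotProduct, PiLp.inner_apply, RCLike.inner_apply]
  exact Finset.sum_congr rfl fun _ _ => mul_comm _ _

lemma kac_step {m n : ℕ} (A : Matrix (Fin m) (Fin n) ℝ) (b : Fin m → ℝ)
    (x0 xstar : EuclideanSpace ℝ (Fin n)) (hxstar : A.mulVec xstar = b)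
    (k : ℕ) (w : Fin k → Fin m) (i : Fin m) :
    kacF A b x0 (k+1) (Fin.snoc w i) - xstar
      = (kacF A b x0 k w - xstar)
        - ((⟪A.rowE i, kacF A b x0 k w - xstar⟫_ℝ) / ‖A.rowE i‖ ^ 2) • A.rowE i := by
  have hb : b i = ⟪A.rowE i, xstar⟫_ℝ := by rw [rowE_inner, hxstar]
  have h1 : (Fin.snoc w i : Fin (k+1) → Fin m) ∘ Fin.castSucc = w := Fin.snoc_comp_castSucc
  have h2 : (Fin.snoc w i : Fin (k+1) → Fin m) (Fin.last k) = i := by simp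
  rw [show kacF A b x0 (k+1) (Fin.snoc w i) =
      kacF A b x0 k ((Fin.snoc w i : Fin (k+1) → Fin m) ∘ Fin.castSucc) +
        ((b ((Fin.snoc w i : Fin (k+1) → Fin m) (Fin.last k)) -
          ⟪A.rowE ((Fin.snoc w i : Fin (k+1) → Fin m) (Fin.last k)),
            kacF A b x0 k ((Fin.snoc w i : Fin (k+1) → Fin m) ∘ Fin.castSucc)⟫_ℝ) /
          ‖A.rowE ((Fin.snoc w i : Fin (k+1) → Fin m) (Fin.last k))‖ ^ 2) •
          A.rowE ((Fin.snoc w i : Fin (k+1) → Fin m) (Fin.last k)) from rfl]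
  rw [h1, h2, hb]
  rw [show ⟪A.rowE i, xstar⟫_ℝ - ⟪A.rowE i, kacF A b x0 k w⟫_ℝ
      = -⟪A.rowE i, kacF A b x0 k w - xstar⟫_ℝ by rw [inner_sub_right]; ring]
  rw [neg_div, neg_smul]
  abel

lemma kac_norm_step {n : ℕ} (a e : EuclideanSpace ℝ (Fin n)) (ha : a ≠ 0) :
    ‖e - ((⟪a, e⟫_ℝ) / ‖a‖ ^ 2) • a‖ ^ 2 = ‖e‖ ^ 2 - ⟪a, e⟫_ℝ ^ 2 / ‖a‖ ^ 2 := by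
  have hna : ‖a‖ ≠ 0 := norm_ne_zero_iff.mpr ha
  rw [norm_sub_sq_real, real_inner_smul_right, norm_smul, real_inner_comm]
  rw [mul_pow, Real.norm_eq_abs, sq_abs]
  field_simp
  ring

lemma kac_orth {m n : ℕ} (A : Matrix (Fin m) (Fin n) ℝ) (b : Fin m → ℝ)
    (x0 xstar : EuclideanSpace ℝ (Fin n)) (hxstar : A.mulVec xstar = b)
    (hxorth : ∀ z : EuclideanSpace ℝ (Fin n), A.mulVec z = 0 → ⟪z, xstar - x0⟫_ℝ = 0) :
    ∀ (k : ℕ) (w : Fin k → Fin m) (z : EuclideanSpace ℝ (Fin n)),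
      A.mulVec z = 0 → ⟪z, kacF A b x0 k w - xstar⟫_ℝ = 0 := by
  intro k
  induction k with
  | zero =>
    intro w z hz
    have h := hxorth z hz
    rw [show kacF A b x0 0 w = x0 from rfl,
      show x0 - xstar = -(xstar - x0) by abel, inner_neg_right, h, neg_zero]
  | succ k ih =>
    intro w z hz
    induction w using Fin.snocCases with
    | snoc w i =>
      rw [kac_step A b x0 xstar hxstar k w i, inner_sub_right, ih w z hz,
        real_inner_smul_right]
      have : ⟪z, A.rowE i⟫_ℝ = 0 := by
        rw [real_inner_comm, rowE_inner, hz]; rfl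
      rw [this]
      ring

lemma kac_key {m n : ℕ} (A : Matrix (Fin m) (Fin n) ℝ) (p : Fin m → ℝ) (lammin : ℝ)
    (hlam : IsLeast {r : ℝ | ∃ s : EuclideanSpace ℝ (Fin n), ‖s‖ = 1 ∧
      (∀ z : EuclideanSpace ℝ (Fin n), A.mulVec z = 0 → ⟪z, s⟫_ℝ = 0) ∧
      r = ∑ i, p i * ⟪A.nrowE i, s⟫_ℝ ^ 2} lammin)
    (e : EuclideanSpace ℝ (Fin n))
    (he : ∀ z : EuclideanSpace ℝ (Fin n), A.mulVec z = 0 → ⟪z, e⟫_ℝ = 0) :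
    lammin * ‖e‖ ^ 2 ≤ ∑ i, p i * ⟪A.nrowE i, e⟫_ℝ ^ 2 := by
  by_cases h0 : e = 0
  · simp [h0]
  · have hne : ‖e‖ ≠ 0 := norm_ne_zero_iff.mpr h0
    have hpos : (0:ℝ) < ‖e‖ ^ 2 := by positivity
    set s : EuclideanSpace ℝ (Fin n) := (‖e‖)⁻¹ • e with hs
    have hs1 : ‖s‖ = 1 := norm_smul_inv_norm h0
    have hsorth : ∀ z : EuclideanSpace ℝ (Fin n), A.mulVec z = 0 → ⟪z, s⟫_ℝ = 0 := by
      intro z hz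
      rw [hs, real_inner_smul_right, he z hz, mul_zero]
    have hmem : (∑ i, p i * ⟪A.nrowE i, s⟫_ℝ ^ 2) ∈
        {r : ℝ | ∃ s : EuclideanSpace ℝ (Fin n), ‖s‖ = 1 ∧
          (∀ z : EuclideanSpace ℝ (Fin n), A.mulVec z = 0 → ⟪z, s⟫_ℝ = 0) ∧
          r = ∑ i, p i * ⟪A.nrowE i, s⟫_ℝ ^ 2} := ⟨s, hs1, hsorth, rfl⟩
    have hle := hlam.2 hmem
    have hrw : ∑ i, p i * ⟪A.nrowE i, s⟫_ℝ ^ 2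
        = (∑ i, p i * ⟪A.nrowE i, e⟫_ℝ ^ 2) / ‖e‖ ^ 2 := by
      rw [Finset.sum_div]
      refine Finset.sum_congr rfl fun i _ => ?_
      rw [hs, real_inner_smul_right]
      field_simp
    rw [hrw] at hle
    calc lammin * ‖e‖ ^ 2 ≤ ((∑ i, p i * ⟪A.nrowE i, e⟫_ℝ ^ 2) / ‖e‖ ^ 2) * ‖e‖ ^ 2 :=
          mul_le_mul_of_nonneg_right hle (le_of_lt hpos)
      _ = ∑ i, p i * ⟪A.nrowE i, e⟫_ℝ ^ 2 := by field_simp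

lemma nrowE_inner_sq {m n : ℕ} (A : Matrix (Fin m) (Fin n) ℝ) (i : Fin m)
    (hrow : A.rowE i ≠ 0) (e : EuclideanSpace ℝ (Fin n)) :
    ⟪A.nrowE i, e⟫_ℝ ^ 2 = ⟪A.rowE i, e⟫_ℝ ^ 2 / ‖A.rowE i‖ ^ 2 := by
  have hna : ‖A.rowE i‖ ≠ 0 := norm_ne_zero_iff.mpr hrow
  rw [Matrix.nrowE, real_inner_smul_left]
  field_simp

lemma kac_onestep {m n : ℕ} (A : Matrix (Fin m) (Fin n) ℝ) (b : Fin m → ℝ)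
    (x0 xstar : EuclideanSpace ℝ (Fin n)) (hxstar : A.mulVec xstar = b)
    (hxorth : ∀ z : EuclideanSpace ℝ (Fin n), A.mulVec z = 0 → ⟪z, xstar - x0⟫_ℝ = 0)
    (hrows : ∀ i, A.rowE i ≠ 0)
    (p : Fin m → ℝ) (hpsum : ∑ i, p i = 1) (lammin : ℝ)
    (hlam : IsLeast {r : ℝ | ∃ s : EuclideanSpace ℝ (Fin n), ‖s‖ = 1 ∧
      (∀ z : EuclideanSpace ℝ (Fin n), A.mulVec z = 0 → ⟪z, s⟫_ℝ = 0) ∧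
      r = ∑ i, p i * ⟪A.nrowE i, s⟫_ℝ ^ 2} lammin)
    (k : ℕ) (w : Fin k → Fin m) :
    ∑ i, p i * ‖kacF A b x0 (k+1) (Fin.snoc w i) - xstar‖ ^ 2
      ≤ (1 - lammin) * ‖kacF A b x0 k w - xstar‖ ^ 2 := by
  set e := kacF A b x0 k w - xstar with he
  have h1 : ∑ i, p i * ‖kacF A b x0 (k+1) (Fin.snoc w i) - xstar‖ ^ 2
      = ∑ i, p i * (‖e‖ ^ 2 - ⟪A.nrowE i, e⟫_ℝ ^ 2) := by
    refine Finset.sum_congr rfl fun i _ => ?_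
    rw [kac_step A b x0 xstar hxstar k w i, kac_norm_step _ _ (hrows i), ← he,
      nrowE_inner_sq A i (hrows i) e]
  rw [h1]
  have h2 : ∑ i, p i * (‖e‖ ^ 2 - ⟪A.nrowE i, e⟫_ℝ ^ 2)
      = ‖e‖ ^ 2 - ∑ i, p i * ⟪A.nrowE i, e⟫_ℝ ^ 2 := by
    simp only [mul_sub]
    rw [Finset.sum_sub_distrib, ← Finset.sum_mul, hpsum, one_mul]
  rw [h2]
  have h3 := kac_key A p lammin hlam e (kac_orth A b x0 xstar hxstar hxorth k w)
  linarith

lemma kac_sum {m n : ℕ} (A : Matrix (Fin m) (Fin n) ℝ) (b : Fin m → ℝ)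
    (x0 xstar : EuclideanSpace ℝ (Fin n)) (hxstar : A.mulVec xstar = b)
    (hxorth : ∀ z : EuclideanSpace ℝ (Fin n), A.mulVec z = 0 → ⟪z, xstar - x0⟫_ℝ = 0)
    (hrows : ∀ i, A.rowE i ≠ 0)
    (p : Fin m → ℝ) (hp : ∀ i, 0 < p i) (hpsum : ∑ i, p i = 1) (lammin : ℝ)
    (hlam : IsLeast {r : ℝ | ∃ s : EuclideanSpace ℝ (Fin n), ‖s‖ = 1 ∧
      (∀ z : EuclideanSpace ℝ (Fin n), A.mulVec z = 0 → ⟪z, s⟫_ℝ = 0) ∧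
      r = ∑ i, p i * ⟪A.nrowE i, s⟫_ℝ ^ 2} lammin)
    (hlam01 : lammin ∈ Set.Ioo (0 : ℝ) 1) :
    ∀ k : ℕ, ∑ w : Fin k → Fin m, (∏ j, p (w j)) * ‖kacF A b x0 k w - xstar‖ ^ 2
      ≤ (1 - lammin) ^ k * ‖x0 - xstar‖ ^ 2 := by
  have hprodnn : ∀ {k : ℕ} (w : Fin k → Fin m), (0:ℝ) ≤ ∏ j, p (w j) :=
    fun w => Finset.prod_nonneg fun j _ => (hp (w j)).le
  have h1lam : (0:ℝ) ≤ 1 - lammin := by linarith [hlam01.2]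
  intro k
  induction k with
  | zero =>
    rw [pow_zero, one_mul]
    have h : ∀ w : Fin 0 → Fin m,
        (∏ j, p (w j)) * ‖kacF A b x0 0 w - xstar‖ ^ 2 = ‖x0 - xstar‖ ^ 2 := by
      intro w; simp [show kacF A b x0 0 w = x0 from rfl]
    rw [Finset.sum_congr rfl fun w _ => h w, Finset.sum_const, Finset.card_univ]
    simp
  | succ k ih =>
    have hsum_eq : ∑ w : Fin (k+1) → Fin m, (∏ j, p (w j)) * ‖kacF A b x0 (k+1) w - xstar‖ ^ 2
        = ∑ q : Fin m × (Fin k → Fin m),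
            ((∏ j, p (q.2 j)) * p q.1) * ‖kacF A b x0 (k+1) (Fin.snoc q.2 q.1) - xstar‖ ^ 2 := by
      refine (Fintype.sum_equiv (Fin.snocEquiv (fun _ => Fin m)) _ _ fun q => ?_).symm
      have hprod : ∏ j, p ((Fin.snocEquiv (fun _ => Fin m)) q j) = (∏ j, p (q.2 j)) * p q.1 := by
        simp only [Fin.snocEquiv_apply]
        rw [Fin.prod_univ_castSucc]
        simp
      rw [hprod]
      rfl
    rw [hsum_eq, Fintype.sum_prod_type, Finset.sum_comm]
    have hinner : ∀ w : Fin k → Fin m,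
        ∑ i, ((∏ j, p (w j)) * p i) * ‖kacF A b x0 (k+1) (Fin.snoc w i) - xstar‖ ^ 2
          = (∏ j, p (w j)) * ∑ i, p i * ‖kacF A b x0 (k+1) (Fin.snoc w i) - xstar‖ ^ 2 := by
      intro w
      rw [Finset.mul_sum]
      exact Finset.sum_congr rfl fun i _ => by ring
    calc ∑ w : Fin k → Fin m, ∑ i,
            ((∏ j, p (w j)) * p i) * ‖kacF A b x0 (k+1) (Fin.snoc w i) - xstar‖ ^ 2
        = ∑ w : Fin k → Fin m, (∏ j, p (w j)) *
            ∑ i, p i * ‖kacF A b x0 (k+1) (Fin.snoc w i) - xstar‖ ^ 2 :=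
          Finset.sum_congr rfl fun w _ => hinner w
      _ ≤ ∑ w : Fin k → Fin m, (∏ j, p (w j)) *
            ((1 - lammin) * ‖kacF A b x0 k w - xstar‖ ^ 2) := by
          refine Finset.sum_le_sum fun w _ => ?_
          exact mul_le_mul_of_nonneg_left
            (kac_onestep A b x0 xstar hxstar hxorth hrows p hpsum lammin hlam k w) (hprodnn w)
      _ = (1 - lammin) * ∑ w : Fin k → Fin m,
            (∏ j, p (w j)) * ‖kacF A b x0 k w - xstar‖ ^ 2 := by
          rw [Finset.mul_sum]
          exact Finset.sum_congr rfl fun w _ => by ring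
      _ ≤ (1 - lammin) * ((1 - lammin) ^ k * ‖x0 - xstar‖ ^ 2) :=
          mul_le_mul_of_nonneg_left ih h1lam
      _ = (1 - lammin) ^ (k + 1) * ‖x0 - xstar‖ ^ 2 := by rw [pow_succ]; ring

lemma kac_integral {m : ℕ} (p : Fin m → ℝ) (hp : ∀ i, 0 < p i)
    (Ω : Type) [MeasurableSpace Ω] (μ : Measure Ω) [IsProbabilityMeasure μ]
    (ξ : ℕ → Ω → Fin m) (hmeas : ∀ k, Measurable (ξ k))
    (hindep : ProbabilityTheory.iIndepFun ξ μ)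
    (hdist : ∀ (k : ℕ) (i : Fin m), μ {ω | ξ k ω = i} = ENNReal.ofReal (p i))
    (k : ℕ) (φ : (Fin k → Fin m) → ℝ) :
    ∫ ω, φ (fun j => ξ j ω) ∂μ = ∑ w, (∏ j, p (w j)) * φ w := by
  have hT : Measurable (fun ω => (fun j : Fin k => ξ j ω)) :=
    measurable_pi_lambda _ fun j => hmeas j
  haveI := Measure.isProbabilityMeasure_map (μ := μ) hT.aemeasurable
  rw [← integral_map hT.aemeasurable (measurable_of_countable φ).aestronglyMeasurable]
  rw [integral_fintype (Integrable.of_finite)]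
  refine Finset.sum_congr rfl fun w _ => ?_
  rw [measureReal_def, Measure.map_apply hT (measurableSet_singleton w), smul_eq_mul]
  congr 1
  set s : ℕ → Set Ω := fun i => if h : i < k then ξ i ⁻¹' {w ⟨i, h⟩} else Set.univ with hs
  have hpre : (fun ω => (fun j : Fin k => ξ j ω)) ⁻¹' {w} = ⋂ i ∈ Finset.range k, s i := by
    ext ω
    simp only [Set.mem_preimage, Set.mem_singleton_iff, funext_iff, Set.mem_iInter,
      Finset.mem_range, hs]
    constructor
    · intro h i hi
      rw [dif_pos hi]
      simpa using h ⟨i, hi⟩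
    · intro h j
      have h2 := h j j.isLt
      rw [dif_pos j.isLt] at h2
      simpa using h2
  have hmeas' : ∀ i ∈ Finset.range k,
      MeasurableSet[MeasurableSpace.comap (ξ i) inferInstance] (s i) := by
    intro i hi
    rw [Finset.mem_range] at hi
    refine ⟨{w ⟨i, hi⟩}, measurableSet_singleton _, ?_⟩
    simp only [hs, dif_pos hi]
  set g : ℕ → ℝ := fun i => if h : i < k then p (w ⟨i, h⟩) else 1 with hg
  have hμs : ∀ i ∈ Finset.range k, μ (s i) = ENNReal.ofReal (g i) := by
    intro i hi
    rw [Finset.mem_range] at hi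
    have heq : s i = {ω | ξ i ω = w ⟨i, hi⟩} := by
      simp only [hs, dif_pos hi]
      ext ω; simp
    rw [heq, hdist i (w ⟨i, hi⟩)]
    congr 1
    simp [hg, dif_pos hi]
  have hgnn : ∀ i ∈ Finset.range k, (0:ℝ) ≤ g i := by
    intro i _
    by_cases h : i < k
    · simp [hg, h, (hp _).le]
    · simp [hg, h]
  have hgprodnn : (0:ℝ) ≤ ∏ i ∈ Finset.range k, g i := Finset.prod_nonneg hgnn
  have hgprodeq : ∏ i ∈ Finset.range k, g i = ∏ j : Fin k, p (w j) := by
    rw [show (∏ j : Fin k, p (w j)) = ∏ j : Fin k, g (j : ℕ) from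
      Finset.prod_congr rfl fun j _ => by simp [hg, j.isLt],
      Fin.prod_univ_eq_prod_range]
  rw [hpre, hindep.meas_biInter hmeas', Finset.prod_congr rfl hμs,
    ← ENNReal.ofReal_prod_of_nonneg hgnn, ENNReal.toReal_ofReal hgprodnn, hgprodeq]

lemma kacF_snoc {m n : ℕ} (A : Matrix (Fin m) (Fin n) ℝ) (b : Fin m → ℝ)
    (x0 : EuclideanSpace ℝ (Fin n)) (k : ℕ) (w : Fin k → Fin m) (i : Fin m) :
    kacF A b x0 (k+1) (Fin.snoc w i) = kacF A b x0 k w +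
      ((b i - ⟪A.rowE i, kacF A b x0 k w⟫_ℝ) / ‖A.rowE i‖ ^ 2) • A.rowE i := by
  have h1 : (Fin.snoc w i : Fin (k+1) → Fin m) ∘ Fin.castSucc = w := Fin.snoc_comp_castSucc
  have h2 : (Fin.snoc w i : Fin (k+1) → Fin m) (Fin.last k) = i := by simp
  rw [show kacF A b x0 (k+1) (Fin.snoc w i) =
      kacF A b x0 k ((Fin.snoc w i : Fin (k+1) → Fin m) ∘ Fin.castSucc) +
        ((b ((Fin.snoc w i : Fin (k+1) → Fin m) (Fin.last k)) -
          ⟪A.rowE ((Fin.snoc w i : Fin (k+1) → Fin m) (Fin.last k)),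
            kacF A b x0 k ((Fin.snoc w i : Fin (k+1) → Fin m) ∘ Fin.castSucc)⟫_ℝ) /
          ‖A.rowE ((Fin.snoc w i : Fin (k+1) → Fin m) (Fin.last k))‖ ^ 2) •
          A.rowE ((Fin.snoc w i : Fin (k+1) → Fin m) (Fin.last k)) from rfl]
  rw [h1, h2]

/-- Exponential decay of the mean squared error of the randomized Kaczmarz scheme:
if `λ_min ∈ (0,1)`, then `E[‖e(n)‖²] ≤ (1 - λ_min)^n ‖e(0)‖²`. -/
theorem randomized_kaczmarz_mean_square_error
    (m n : ℕ) (A : Matrix (Fin m) (Fin n) ℝ) (b : Fin m → ℝ)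
    (hrows : ∀ i, A.rowE i ≠ 0)
    (hconsistent : ∃ x : EuclideanSpace ℝ (Fin n), A.mulVec x = b)
    (p : Fin m → ℝ) (hp : ∀ i, 0 < p i) (hpsum : ∑ i, p i = 1)
    (Ω : Type) [MeasurableSpace Ω] (μ : Measure Ω) [IsProbabilityMeasure μ]
    (ξ : ℕ → Ω → Fin m) (hmeas : ∀ k, Measurable (ξ k))
    (hindep : ProbabilityTheory.iIndepFun ξ μ)
    (hdist : ∀ (k : ℕ) (i : Fin m), μ {ω | ξ k ω = i} = ENNReal.ofReal (p i))
    (x0 : EuclideanSpace ℝ (Fin n))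
    (X : ℕ → Ω → EuclideanSpace ℝ (Fin n))
    (hX0 : ∀ ω, X 0 ω = x0)
    (hXstep : ∀ (k : ℕ) (ω : Ω), X (k + 1) ω = X k ω +
      ((b (ξ k ω) - ⟪A.rowE (ξ k ω), X k ω⟫_ℝ) / ‖A.rowE (ξ k ω)‖ ^ 2) • A.rowE (ξ k ω))
    (xstar : EuclideanSpace ℝ (Fin n))
    (hxstar : A.mulVec xstar = b)
    (hxorth : ∀ z : EuclideanSpace ℝ (Fin n), A.mulVec z = 0 → ⟪z, xstar - x0⟫_ℝ = 0)
    (lammin : ℝ)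
    (hlam : IsLeast {r : ℝ | ∃ s : EuclideanSpace ℝ (Fin n), ‖s‖ = 1 ∧
      (∀ z : EuclideanSpace ℝ (Fin n), A.mulVec z = 0 → ⟪z, s⟫_ℝ = 0) ∧
      r = ∑ i, p i * ⟪A.nrowE i, s⟫_ℝ ^ 2} lammin)
    (hlam01 : lammin ∈ Set.Ioo (0 : ℝ) 1) :
    ∀ k : ℕ, ∫ ω, ‖X k ω - xstar‖ ^ 2 ∂μ ≤ (1 - lammin) ^ k * ‖x0 - xstar‖ ^ 2 := by
  have hid : ∀ (k : ℕ) (ω : Ω), X k ω = kacF A b x0 k (fun j => ξ j ω) := by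
    intro k
    induction k with
    | zero => intro ω; rw [hX0]; rfl
    | succ k ih =>
      intro ω
      have hsnoc : (fun j : Fin (k+1) => ξ (j : ℕ) ω)
          = Fin.snoc (fun j : Fin k => ξ (j : ℕ) ω) (ξ k ω) := by
        funext j
        refine Fin.lastCases ?_ (fun j => ?_) j
        · simp
        · simp
      rw [hXstep k ω, ih ω, hsnoc, kacF_snoc]
  intro k
  have heq : (fun ω => ‖X k ω - xstar‖ ^ 2)
      = fun ω => ‖kacF A b x0 k (fun j => ξ j ω) - xstar‖ ^ 2 :=
    funext fun ω => by rw [hid k ω]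
  have hInt := kac_integral p hp Ω μ ξ hmeas hindep hdist k
    (fun w => ‖kacF A b x0 k w - xstar‖ ^ 2)
  calc ∫ ω, ‖X k ω - xstar‖ ^ 2 ∂μ
      = ∫ ω, ‖kacF A b x0 k (fun j => ξ j ω) - xstar‖ ^ 2 ∂μ := by rw [heq]
    _ = ∑ w, (∏ j, p (w j)) * ‖kacF A b x0 k w - xstar‖ ^ 2 := hInt
    _ ≤ (1 - lammin) ^ k * ‖x0 - xstar‖ ^ 2 :=
        kac_sum A b x0 xstar hxstar hxorth hrows p hp hpsum lammin hlam hlam01 k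
end

section
/- Under the randomized Kaczmarz scheme, if λ_min ∈ (0,1), then e(n) → 0 almost surely; that is, the iterates x(n) converge almost surely to the unique solution x* of Ax = b with x* − x(0) orthogonal to the kernel of A. -/
open scoped InnerProductSpace
open MeasureTheory

/-- One Kaczmarz step on the error vector, with normalized direction `v`. -/
noncomputable def kacStep {E : Type*} [NormedAddCommGroup E] [InnerProductSpace ℝ E]
    (v e : E) : E := e - ⟪v, e⟫_ℝ • v

/-- The error after `k` steps, as a function of the chosen row indices. -/
noncomputable def kacErr {E : Type*} [NormedAddCommGroup E] [InnerProductSpace ℝ E]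
    {m : ℕ} (v : Fin m → E) (e0 : E) : (k : ℕ) → (Fin k → Fin m) → E
  | 0, _ => e0
  | (k+1), t => kacStep (v (t (Fin.last k))) (kacErr v e0 k (t ∘ Fin.castSucc))

lemma kacStep_normsq {E : Type*} [NormedAddCommGroup E] [InnerProductSpace ℝ E]
    {v : E} (hv : ‖v‖ = 1) (e : E) :
    ‖kacStep v e‖ ^ 2 = ‖e‖ ^ 2 - ⟪v, e⟫_ℝ ^ 2 := by
  have h := norm_sub_sq_real e (⟪v, e⟫_ℝ • v)
  rw [kacStep, h, real_inner_smul_right, norm_smul, real_inner_comm e v]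
  simp [hv, mul_pow]
  ring

lemma kacStep_orth {E : Type*} [NormedAddCommGroup E] [InnerProductSpace ℝ E]
    {v e z : E} (hz : ⟪z, e⟫_ℝ = 0) (hzv : ⟪z, v⟫_ℝ = 0) :
    ⟪z, kacStep v e⟫_ℝ = 0 := by
  rw [kacStep, inner_sub_right, inner_smul_right, hz, hzv]
  ring

/-- Almost sure convergence of the randomized Kaczmarz scheme:
if `λ_min ∈ (0,1)`, then the iterates `x(n)` converge almost surely to the unique solution `x*` of `A x = b` with `x* - x(0)` orthogonal to the kernel of `A`. -/
theorem randomized_kaczmarz_almost_sure_convergence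
    (m n : ℕ) (A : Matrix (Fin m) (Fin n) ℝ) (b : Fin m → ℝ)
    (hrows : ∀ i, A.rowE i ≠ 0)
    (hconsistent : ∃ x : EuclideanSpace ℝ (Fin n), A.mulVec x = b)
    (p : Fin m → ℝ) (hp : ∀ i, 0 < p i) (hpsum : ∑ i, p i = 1)
    (Ω : Type) [MeasurableSpace Ω] (μ : Measure Ω) [IsProbabilityMeasure μ]
    (ξ : ℕ → Ω → Fin m) (hmeas : ∀ k, Measurable (ξ k))
    (hindep : ProbabilityTheory.iIndepFun ξ μ)
    (hdist : ∀ (k : ℕ) (i : Fin m), μ {ω | ξ k ω = i} = ENNReal.ofReal (p i))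
    (x0 : EuclideanSpace ℝ (Fin n))
    (X : ℕ → Ω → EuclideanSpace ℝ (Fin n))
    (hX0 : ∀ ω, X 0 ω = x0)
    (hXstep : ∀ (k : ℕ) (ω : Ω), X (k + 1) ω = X k ω +
      ((b (ξ k ω) - ⟪A.rowE (ξ k ω), X k ω⟫_ℝ) / ‖A.rowE (ξ k ω)‖ ^ 2) • A.rowE (ξ k ω))
    (xstar : EuclideanSpace ℝ (Fin n))
    (hxstar : A.mulVec xstar = b)
    (hxorth : ∀ z : EuclideanSpace ℝ (Fin n), A.mulVec z = 0 → ⟪z, xstar - x0⟫_ℝ = 0)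
    (lammin : ℝ)
    (hlam : IsLeast {r : ℝ | ∃ s : EuclideanSpace ℝ (Fin n), ‖s‖ = 1 ∧
      (∀ z : EuclideanSpace ℝ (Fin n), A.mulVec z = 0 → ⟪z, s⟫_ℝ = 0) ∧
      r = ∑ i, p i * ⟪A.nrowE i, s⟫_ℝ ^ 2} lammin)
    (hlam01 : lammin ∈ Set.Ioo (0 : ℝ) 1) :
    ∀ᵐ ω ∂μ, Filter.Tendsto (fun k => X k ω) Filter.atTop (nhds xstar) := by
  classical
  set nr : Fin m → EuclideanSpace ℝ (Fin n) := A.nrowE with hnr_def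
  -- inner product with a row computes a coordinate of mulVec
  have hinner_row : ∀ (i : Fin m) (x : EuclideanSpace ℝ (Fin n)),
      ⟪A.rowE i, x⟫_ℝ = A.mulVec x i := by
    intro i x
    simp [PiLp.inner_apply, Matrix.mulVec, dotProduct, Matrix.rowE, RCLike.inner_apply,
      conj_trivial, mul_comm]
  have hrownorm : ∀ i, ‖A.rowE i‖ ≠ 0 := fun i => norm_ne_zero_iff.mpr (hrows i)
  have hnrm : ∀ i, ‖nr i‖ = 1 := by
    intro i
    rw [hnr_def, Matrix.nrowE, norm_smul, norm_inv, norm_norm, inv_mul_cancel₀ (hrownorm i)]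
  -- orthogonality of rows to the kernel
  have hrow_orth : ∀ (z : EuclideanSpace ℝ (Fin n)), A.mulVec z = 0 →
      ∀ i, ⟪z, nr i⟫_ℝ = 0 := by
    intro z hz i
    rw [hnr_def, Matrix.nrowE, real_inner_smul_right, real_inner_comm, hinner_row, hz]
    simp
  -- the error process follows kacErr
  set g : (k : ℕ) → (Fin k → Fin m) → EuclideanSpace ℝ (Fin n) := kacErr nr (x0 - xstar)
    with hg_def
  have hXrec : ∀ (k : ℕ) (ω : Ω),
      X (k+1) ω - xstar = kacStep (nr (ξ k ω)) (X k ω - xstar) := by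
    intro k ω
    set i := ξ k ω
    have hb : b i = ⟪A.rowE i, xstar⟫_ℝ := by rw [hinner_row, hxstar]
    have hcoef : ((b i - ⟪A.rowE i, X k ω⟫_ℝ) / ‖A.rowE i‖ ^ 2) • A.rowE i
        = -(⟪nr i, X k ω - xstar⟫_ℝ • nr i) := by
      rw [hnr_def, Matrix.nrowE, real_inner_smul_left, smul_smul, inner_sub_right, hb]
      rw [div_eq_mul_inv]
      field_simp
      rw [← neg_smul]
      congr 1
      ring
    rw [hXstep k ω, kacStep]
    rw [div_eq_mul_inv] at hcoef ⊢
    rw [show X k ω + ((b i - ⟪A.rowE i, X k ω⟫_ℝ) * (‖A.rowE i‖ ^ 2)⁻¹) • A.rowE i - xstar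
      = (X k ω - xstar) + ((b i - ⟪A.rowE i, X k ω⟫_ℝ) * (‖A.rowE i‖ ^ 2)⁻¹) • A.rowE i by abel]
    rw [hcoef]
    abel
  have hrepr : ∀ (k : ℕ) (ω : Ω),
      X k ω - xstar = g k (fun j => ξ (j : ℕ) ω) := by
    intro k
    induction k with
    | zero => intro ω; simp [hg_def, kacErr, hX0 ω]
    | succ k ih =>
      intro ω
      rw [hXrec k ω, ih ω, hg_def]
      show kacStep _ _ = kacErr nr (x0 - xstar) (k+1) (fun j : Fin (k+1) => ξ (j : ℕ) ω)
      rw [kacErr]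
      congr 1
  -- deterministic facts about g
  have horthg : ∀ (k : ℕ) (t : Fin k → Fin m) (z : EuclideanSpace ℝ (Fin n)),
      A.mulVec z = 0 → ⟪z, g k t⟫_ℝ = 0 := by
    intro k
    induction k with
    | zero =>
      intro t z hz
      have := hxorth z hz
      rw [hg_def]
      show ⟪z, x0 - xstar⟫_ℝ = 0
      rw [show x0 - xstar = -(xstar - x0) by abel, inner_neg_right, this, neg_zero]
    | succ k ih =>
      intro t z hz
      rw [hg_def]
      show ⟪z, kacStep _ _⟫_ℝ = 0
      exact kacStep_orth (ih _ z hz) (hrow_orth z hz _)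
  have hnormsq : ∀ (k : ℕ) (t : Fin (k+1) → Fin m),
      ‖g (k+1) t‖ ^ 2 = ‖g k (t ∘ Fin.castSucc)‖ ^ 2
        - ⟪nr (t (Fin.last k)), g k (t ∘ Fin.castSucc)⟫_ℝ ^ 2 := by
    intro k t
    rw [hg_def]
    show ‖kacStep _ _‖ ^ 2 = _
    exact kacStep_normsq (hnrm _) _
  -- spectral lower bound
  have hlb : ∀ e : EuclideanSpace ℝ (Fin n),
      (∀ z : EuclideanSpace ℝ (Fin n), A.mulVec z = 0 → ⟪z, e⟫_ℝ = 0) →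
      lammin * ‖e‖ ^ 2 ≤ ∑ i, p i * ⟪nr i, e⟫_ℝ ^ 2 := by
    intro e he
    rcases eq_or_ne e 0 with rfl | hne
    · simp
    · have hnorm : ‖e‖ ≠ 0 := norm_ne_zero_iff.mpr hne
      set s : EuclideanSpace ℝ (Fin n) := ‖e‖⁻¹ • e with hs_def
      have hsnorm : ‖s‖ = 1 := by
        rw [hs_def, norm_smul, norm_inv, norm_norm, inv_mul_cancel₀ hnorm]
      have hsorth : ∀ z : EuclideanSpace ℝ (Fin n), A.mulVec z = 0 → ⟪z, s⟫_ℝ = 0 := by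
        intro z hz
        rw [hs_def, real_inner_smul_right, he z hz, mul_zero]
      have hmem : (∑ i, p i * ⟪A.nrowE i, s⟫_ℝ ^ 2) ∈ {r : ℝ | ∃ s : EuclideanSpace ℝ (Fin n),
          ‖s‖ = 1 ∧ (∀ z : EuclideanSpace ℝ (Fin n), A.mulVec z = 0 → ⟪z, s⟫_ℝ = 0) ∧
          r = ∑ i, p i * ⟪A.nrowE i, s⟫_ℝ ^ 2} := ⟨s, hsnorm, hsorth, rfl⟩
      have hlow := hlam.2 hmem
      have hexp : ∀ i, ⟪nr i, s⟫_ℝ ^ 2 = ‖e‖⁻¹ ^ 2 * ⟪nr i, e⟫_ℝ ^ 2 := by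
        intro i
        rw [hs_def, real_inner_smul_right, mul_pow]
      calc lammin * ‖e‖ ^ 2 ≤ (∑ i, p i * ⟪A.nrowE i, s⟫_ℝ ^ 2) * ‖e‖ ^ 2 := by
            apply mul_le_mul_of_nonneg_right hlow (sq_nonneg _)
        _ = ∑ i, p i * ⟪nr i, e⟫_ℝ ^ 2 := by
            rw [Finset.sum_mul]
            apply Finset.sum_congr rfl
            intro i _
            rw [← hnr_def, hexp i]
            field_simp
  -- expected squared error
  set D : ℕ → ℝ := fun k => ∑ t : Fin k → Fin m, (∏ j, p (t j)) * ‖g k t‖ ^ 2 with hD_def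
  have hDnonneg : ∀ k, 0 ≤ D k := by
    intro k
    apply Finset.sum_nonneg
    intro t _
    exact mul_nonneg (Finset.prod_nonneg fun j _ => (hp _).le) (sq_nonneg _)
  have hDrec : ∀ k, D (k+1) ≤ (1 - lammin) * D k := by
    intro k
    have key : ∀ s : Fin k → Fin m,
        ∑ i, p i * (‖g k s‖ ^ 2 - ⟪nr i, g k s⟫_ℝ ^ 2) ≤ (1 - lammin) * ‖g k s‖ ^ 2 := by
      intro s
      have h1 : ∑ i, p i * (‖g k s‖ ^ 2 - ⟪nr i, g k s⟫_ℝ ^ 2)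
          = ‖g k s‖ ^ 2 - ∑ i, p i * ⟪nr i, g k s⟫_ℝ ^ 2 := by
        simp only [mul_sub]
        rw [Finset.sum_sub_distrib, ← Finset.sum_mul, hpsum, one_mul]
      have h2 := hlb (g k s) (fun z hz => horthg k s z hz)
      rw [h1]
      nlinarith
    have hsum : D (k+1) = ∑ s : Fin k → Fin m,
        (∏ j, p (s j)) * ∑ i, p i * (‖g k s‖ ^ 2 - ⟪nr i, g k s⟫_ℝ ^ 2) := by
      show ∑ t : Fin (k+1) → Fin m, (∏ j, p (t j)) * ‖g (k+1) t‖ ^ 2 = _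
      rw [← Fintype.sum_equiv (Fin.snocEquiv (fun _ => Fin m))
        (fun q : Fin m × (Fin k → Fin m) =>
          (∏ j : Fin (k+1), p ((Fin.snoc q.2 q.1 : Fin (k+1) → Fin m) j)) * ‖g (k+1) ((Fin.snoc q.2 q.1 : Fin (k+1) → Fin m))‖ ^ 2)
        (fun t => (∏ j, p (t j)) * ‖g (k+1) t‖ ^ 2) (fun q => by rfl)]
      rw [Fintype.sum_prod_type, Finset.sum_comm]
      apply Finset.sum_congr rfl
      intro s _
      rw [Finset.mul_sum]
      apply Finset.sum_congr rfl
      intro i _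
      rw [hnormsq k (Fin.snoc s i), Fin.snoc_comp_castSucc, Fin.prod_univ_castSucc]
      simp only [Fin.snoc_castSucc, Fin.snoc_last]
      ring
    rw [hsum, hD_def]
    have : (1 - lammin) * ∑ t : Fin k → Fin m, (∏ j, p (t j)) * ‖g k t‖ ^ 2
        = ∑ s : Fin k → Fin m, (∏ j, p (s j)) * ((1 - lammin) * ‖g k s‖ ^ 2) := by
      rw [Finset.mul_sum]
      apply Finset.sum_congr rfl
      intro s _
      ring
    rw [this]
    apply Finset.sum_le_sum
    intro s _
    exact mul_le_mul_of_nonneg_left (key s)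
      (Finset.prod_nonneg fun j _ => (hp _).le)
  have hDle : ∀ k, D k ≤ (1 - lammin) ^ k * D 0 := by
    intro k
    induction k with
    | zero => simp
    | succ k ih =>
      calc D (k+1) ≤ (1 - lammin) * D k := hDrec k
        _ ≤ (1 - lammin) * ((1 - lammin) ^ k * D 0) := by
            apply mul_le_mul_of_nonneg_left ih (by linarith [hlam01.2])
        _ = (1 - lammin) ^ (k+1) * D 0 := by ring
  -- the lintegral of the squared error equals D k
  set τ : (k : ℕ) → Ω → (Fin k → Fin m) := fun k ω j => ξ (j : ℕ) ω with hτ_def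
  have hτmeas : ∀ k, Measurable (τ k) :=
    fun k => measurable_pi_lambda _ (fun j => hmeas (j : ℕ))
  have hμt : ∀ (k : ℕ) (t : Fin k → Fin m),
      μ (τ k ⁻¹' {t}) = ∏ j, ENNReal.ofReal (p (t j)) := by
    intro k t
    set s : ℕ → Set Ω := fun j => if h : j < k then ξ j ⁻¹' {t ⟨j, h⟩} else Set.univ with hs_def
    have hset : τ k ⁻¹' {t} = ⋂ j ∈ Finset.range k, s j := by
      ext ω
      simp only [Set.mem_preimage, Set.mem_singleton_iff, Set.mem_iInter, Finset.mem_range,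
        funext_iff]
      constructor
      · intro h j hj
        rw [hs_def]
        simp only [dif_pos hj]
        exact h ⟨j, hj⟩
      · intro h j
        have := h (j : ℕ) j.isLt
        rw [hs_def] at this
        simp only [dif_pos j.isLt] at this
        simpa using this
    have hmeasb : μ (⋂ j ∈ Finset.range k, s j) = ∏ j ∈ Finset.range k, μ (s j) := by
      apply hindep.meas_biInter
      intro j hj
      rw [Finset.mem_range] at hj
      refine ⟨{t ⟨j, hj⟩}, trivial, ?_⟩
      rw [hs_def]
      simp only [dif_pos hj]
    rw [hset, hmeasb, ← Fin.prod_univ_eq_prod_range (fun j => μ (s j)) k]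
    apply Finset.prod_congr rfl
    intro j _
    rw [hs_def]
    simp only [dif_pos j.isLt]
    rw [show (ξ (j : ℕ) ⁻¹' {t ⟨(j : ℕ), j.isLt⟩}) = {ω | ξ (j : ℕ) ω = t j} by
      ext ω; simp [Fin.eta]]
    exact hdist _ _
  have hEint : ∀ k, ∫⁻ ω, ENNReal.ofReal (‖X k ω - xstar‖ ^ 2) ∂μ = ENNReal.ofReal (D k) := by
    intro k
    have hcongr : (fun ω => ENNReal.ofReal (‖X k ω - xstar‖ ^ 2))
        = fun ω => ENNReal.ofReal (‖g k (τ k ω)‖ ^ 2) := by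
      funext ω
      rw [hrepr k ω]
    have hmap : ∫⁻ ω, ENNReal.ofReal (‖g k (τ k ω)‖ ^ 2) ∂μ
        = ∫⁻ t, ENNReal.ofReal (‖g k t‖ ^ 2) ∂(μ.map (τ k)) :=
      (lintegral_map (f := fun t => ENNReal.ofReal (‖g k t‖ ^ 2))
        Measurable.of_discrete (hτmeas k)).symm
    rw [hcongr, hmap, lintegral_fintype]
    have : ∀ t : Fin k → Fin m, ENNReal.ofReal (‖g k t‖ ^ 2) * (μ.map (τ k)) {t}
        = ENNReal.ofReal ((∏ j, p (t j)) * ‖g k t‖ ^ 2) := by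
      intro t
      rw [Measure.map_apply (hτmeas k) (measurableSet_singleton t), hμt k t,
        ← ENNReal.ofReal_prod_of_nonneg (fun j _ => (hp _).le),
        ← ENNReal.ofReal_mul (by positivity), mul_comm]
    rw [Finset.sum_congr rfl (fun t _ => this t), hD_def,
      ENNReal.ofReal_sum_of_nonneg]
    intro t _
    exact mul_nonneg (Finset.prod_nonneg fun j _ => (hp _).le) (sq_nonneg _)
  -- pathwise monotonicity
  have hmono : ∀ (ω : Ω) (k : ℕ), ‖X (k+1) ω - xstar‖ ^ 2 ≤ ‖X k ω - xstar‖ ^ 2 := by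
    intro ω k
    rw [hrepr (k+1) ω, hrepr k ω]
    have := hnormsq k (fun j : Fin (k+1) => ξ (j : ℕ) ω)
    have h2 : (fun j : Fin (k+1) => ξ (j : ℕ) ω) ∘ Fin.castSucc = fun j : Fin k => ξ (j : ℕ) ω := by
      funext j; simp
    rw [h2] at this
    nlinarith [sq_nonneg ⟪nr ((fun j : Fin (k+1) => ξ (j:ℕ) ω) (Fin.last k)),
      g k (fun j : Fin k => ξ (j : ℕ) ω)⟫_ℝ]
  -- Markov + Borel-Cantelli-free argument
  have hanti : ∀ ω, Antitone (fun k => ‖X k ω - xstar‖ ^ 2) :=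
    fun ω => antitone_nat_of_succ_le (fun k => hmono ω k)
  have hbad : ∀ q : ℕ, μ {ω | ∀ k, 1 / ((q : ℝ) + 1) ≤ ‖X k ω - xstar‖ ^ 2} = 0 := by
    intro q
    set ε : ℝ := 1 / ((q : ℝ) + 1) with hε_def
    have hεpos : 0 < ε := by positivity
    set B := {ω | ∀ k, ε ≤ ‖X k ω - xstar‖ ^ 2} with hB_def
    have hkey : ∀ k, ENNReal.ofReal ε * μ B ≤ ENNReal.ofReal ((1 - lammin) ^ k * D 0) := by
      intro k
      have hsub : B ⊆ {ω | ENNReal.ofReal ε ≤ ENNReal.ofReal (‖X k ω - xstar‖ ^ 2)} := by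
        intro ω hω
        exact ENNReal.ofReal_le_ofReal (hω k)
      have haemeas : AEMeasurable (fun ω => ENNReal.ofReal (‖X k ω - xstar‖ ^ 2)) μ := by
        have : (fun ω => ENNReal.ofReal (‖X k ω - xstar‖ ^ 2))
            = fun ω => ENNReal.ofReal (‖g k (τ k ω)‖ ^ 2) := by
          funext ω; rw [hrepr k ω]
        rw [this]
        exact ((Measurable.of_discrete (f := fun t : Fin k → Fin m => ENNReal.ofReal (‖g k t‖ ^ 2))).comp (hτmeas k)).aemeasurable
      calc ENNReal.ofReal ε * μ B
          ≤ ENNReal.ofReal ε * μ {ω | ENNReal.ofReal ε ≤ ENNReal.ofReal (‖X k ω - xstar‖ ^ 2)} :=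
            mul_le_mul_right (measure_mono hsub) _
        _ ≤ ∫⁻ ω, ENNReal.ofReal (‖X k ω - xstar‖ ^ 2) ∂μ :=
            mul_meas_ge_le_lintegral₀ haemeas _
        _ = ENNReal.ofReal (D k) := hEint k
        _ ≤ ENNReal.ofReal ((1 - lammin) ^ k * D 0) := ENNReal.ofReal_le_ofReal (hDle k)
    have htend : Filter.Tendsto (fun k => ENNReal.ofReal ((1 - lammin) ^ k * D 0))
        Filter.atTop (nhds 0) := by
      have h1 : Filter.Tendsto (fun k : ℕ => (1 - lammin) ^ k * D 0) Filter.atTop (nhds 0) := by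
        have := (tendsto_pow_atTop_nhds_zero_of_lt_one (by linarith [hlam01.2] : (0:ℝ) ≤ 1 - lammin)
          (by linarith [hlam01.1] : (1:ℝ) - lammin < 1)).mul_const (D 0)
        simpa using this
      have := (ENNReal.continuous_ofReal.tendsto 0).comp h1
      simpa [Function.comp_def] using this
    have hle : ENNReal.ofReal ε * μ B ≤ 0 :=
      ge_of_tendsto' htend (fun k => hkey k)
    have : ENNReal.ofReal ε * μ B = 0 := le_antisymm hle zero_le
    rcases mul_eq_zero.mp this with h | h
    · exact absurd h (by simp [ENNReal.ofReal_eq_zero]; linarith)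
    · exact h
  have hae : ∀ᵐ ω ∂μ, ∀ q : ℕ, ∃ k, ‖X k ω - xstar‖ ^ 2 < 1 / ((q : ℝ) + 1) := by
    rw [ae_all_iff]
    intro q
    have := hbad q
    rw [← compl_compl {ω | ∀ k, 1 / ((q : ℝ) + 1) ≤ ‖X k ω - xstar‖ ^ 2}] at this
    refine (ae_iff.mpr ?_)
    convert hbad q using 2
    ext ω
    simp [not_exists, not_lt]
  filter_upwards [hae] with ω hω
  have hsq : Filter.Tendsto (fun k => ‖X k ω - xstar‖ ^ 2) Filter.atTop (nhds 0) := by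
    rw [Metric.tendsto_atTop]
    intro δ hδ
    obtain ⟨q, hq⟩ := exists_nat_one_div_lt hδ
    obtain ⟨k0, hk0⟩ := hω q
    refine ⟨k0, fun k hk => ?_⟩
    have h1 : ‖X k ω - xstar‖ ^ 2 ≤ ‖X k0 ω - xstar‖ ^ 2 := hanti ω hk
    rw [Real.dist_eq, sub_zero, abs_of_nonneg (sq_nonneg _)]
    calc ‖X k ω - xstar‖ ^ 2 ≤ ‖X k0 ω - xstar‖ ^ 2 := h1
      _ < 1 / ((q : ℝ) + 1) := hk0
      _ < δ := hq
  have hnorm : Filter.Tendsto (fun k => ‖X k ω - xstar‖) Filter.atTop (nhds 0) := by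
    have := (Real.continuous_sqrt.tendsto 0).comp hsq
    simp only [Function.comp_def, Real.sqrt_zero] at this
    convert this using 2 with k
    rw [Real.sqrt_sq (norm_nonneg _)]
  rw [tendsto_iff_norm_sub_tendsto_zero]
  exact hnorm
end

section
/- Let G be a connected finite simple graph on N vertices with M edges, with an orientation giving incidence matrix L ∈ ℝ^{N×M}, and let λ_min and λ_max denote the smallest nonzero and largest eigenvalues of the Laplacian LLᵀ. Suppose v, v̂ ∈ ℝ^N both have coordinates summing to zero and satisfy the normal equations LLᵀ v = L y' and LLᵀ v̂ = L y for vectors y', y ∈ ℝ^M. If |y_e − y'_e| ≤ δ for every edge e, then ‖v̂ − v‖ ≤ √(λ_max · M) · δ / λ_min. -/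
open Matrix

/-- A vector of `Fin n → ℝ`, viewed as a vector of Euclidean space. -/
def toE {n : ℕ} (v : Fin n → ℝ) : EuclideanSpace ℝ (Fin n) := WithLp.toLp 2 v

lemma inner_toE {n : ℕ} (x y : Fin n → ℝ) : (inner ℝ (toE x) (toE y) : ℝ) = x ⬝ᵥ y := by
  simp [toE, PiLp.inner_apply, dotProduct, mul_comm]

lemma norm_sq_toE {n : ℕ} (x : Fin n → ℝ) : ‖toE x‖ ^ 2 = x ⬝ᵥ x := by
  rw [← inner_toE]; exact (real_inner_self_eq_norm_sq (toE x)).symm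

lemma repr_toE_apply {n : ℕ} {A : Matrix (Fin n) (Fin n) ℝ} (hA : A.IsHermitian)
    (u : Fin n → ℝ) (i : Fin n) :
    hA.eigenvectorBasis.repr (toE u) i = (fun j => hA.eigenvectorBasis i j) ⬝ᵥ u := by
  rw [hA.eigenvectorBasis.repr_apply_apply]
  exact inner_toE _ u

lemma repr_mulVec {n : ℕ} {A : Matrix (Fin n) (Fin n) ℝ} (hA : A.IsHermitian)
    (u : Fin n → ℝ) (i : Fin n) :
    hA.eigenvectorBasis.repr (toE (A *ᵥ u)) i
      = hA.eigenvalues i * hA.eigenvectorBasis.repr (toE u) i := by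
  rw [repr_toE_apply, repr_toE_apply]
  have hAT : Aᵀ = A := by
    have := hA.eq; rwa [conjTranspose_eq_transpose_of_trivial] at this
  calc (fun j => hA.eigenvectorBasis i j) ⬝ᵥ (A *ᵥ u)
      = (Aᵀ *ᵥ fun j => hA.eigenvectorBasis i j) ⬝ᵥ u := by
        rw [dotProduct_mulVec, mulVec_transpose]
    _ = (hA.eigenvalues i • fun j => hA.eigenvectorBasis i j) ⬝ᵥ u := by
        rw [hAT]
        congr 1
        exact hA.mulVec_eigenvectorBasis i
    _ = hA.eigenvalues i * (fun j => hA.eigenvectorBasis i j) ⬝ᵥ u := smul_dotProduct _ _ _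

lemma norm_sq_eq_sum_repr {n : ℕ} {A : Matrix (Fin n) (Fin n) ℝ} (hA : A.IsHermitian)
    (x : EuclideanSpace ℝ (Fin n)) :
    ‖x‖ ^ 2 = ∑ i, (hA.eigenvectorBasis.repr x i) ^ 2 := by
  rw [← hA.eigenvectorBasis.repr.norm_map x, EuclideanSpace.norm_eq,
    Real.sq_sqrt (by positivity)]
  simp [sq_abs]

/-- Error propagation through the normal equations of a connected graph: if `v` and `v̂` both
have coordinates summing to zero and satisfy `LLᵀ v = L y'` and `LLᵀ v̂ = L y`, where `L` is an
oriented incidence matrix of a connected graph `G` (so that `LLᵀ` is the graph Laplacian), and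
the entries of `y` and `y'` differ by at most `δ`, then `‖v̂ - v‖ ≤ √(λ_max M) δ / λ_min`. -/
theorem laplacian_normal_equation_error_bound
    (N M : ℕ) (G : SimpleGraph (Fin N)) [DecidableRel G.Adj]
    (hconn : G.Connected) (hM : G.edgeFinset.card = M)
    (L : Matrix (Fin N) (Fin M) ℝ)
    (hinc : ∀ e : Fin M, ∃ i j : Fin N, G.Adj i j ∧ L i e = 1 ∧ L j e = -1 ∧
      ∀ k : Fin N, k ≠ i → k ≠ j → L k e = 0)
    (hLap : L * Lᵀ = G.lapMatrix ℝ)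
    (lammin lammax : ℝ)
    (hmin : IsLeast {μ : ℝ | μ ≠ 0 ∧
      ∃ x : EuclideanSpace ℝ (Fin N), x ≠ 0 ∧ (G.lapMatrix ℝ).mulVec x = μ • x} lammin)
    (hmax : IsGreatest {μ : ℝ |
      ∃ x : EuclideanSpace ℝ (Fin N), x ≠ 0 ∧ (G.lapMatrix ℝ).mulVec x = μ • x} lammax)
    (v vhat : EuclideanSpace ℝ (Fin N)) (y' y : Fin M → ℝ) (δ : ℝ)
    (hv : ∑ i, v i = 0) (hvhat : ∑ i, vhat i = 0)
    (heq1 : (G.lapMatrix ℝ).mulVec v = L.mulVec y')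
    (heq2 : (G.lapMatrix ℝ).mulVec vhat = L.mulVec y)
    (hδ : ∀ e : Fin M, |y e - y' e| ≤ δ) :
    ‖vhat - v‖ ≤ Real.sqrt (lammax * M) * δ / lammin := by
  classical
  have hpsd : (G.lapMatrix ℝ).PosSemidef := G.posSemidef_lapMatrix ℝ
  have hA : (G.lapMatrix ℝ).IsHermitian := hpsd.1
  set A := G.lapMatrix ℝ with hAdef
  set b := hA.eigenvectorBasis with hbdef
  set μ := hA.eigenvalues with hμdef
  -- each eigenvalue is in the eigenvalue set
  have hmem : ∀ i, ∃ x : EuclideanSpace ℝ (Fin N), x ≠ 0 ∧ A.mulVec x = μ i • x := by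
    intro i
    exact ⟨b i, b.orthonormal.ne_zero i, hA.mulVec_eigenvectorBasis i⟩
  have hμmax : ∀ i, μ i ≤ lammax := fun i => hmax.2 (hmem i)
  have hμmin : ∀ i, μ i ≠ 0 → lammin ≤ μ i := fun i h => hmin.2 ⟨h, hmem i⟩
  -- lammin > 0
  have hminpos : 0 < lammin := by
    obtain ⟨hne, x, hx0, hx⟩ := hmin.1
    have h1 : (0:ℝ) ≤ x ⬝ᵥ (A *ᵥ x) := by
      have := hpsd.dotProduct_mulVec_nonneg x
      simpa using this
    rw [hx] at h1
    have h2 : x ⬝ᵥ (lammin • (x : Fin N → ℝ)) = lammin * (x ⬝ᵥ x) := by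
      rw [dotProduct_smul, smul_eq_mul]
    have h3 : (0:ℝ) < x ⬝ᵥ x := by
      have hx' : (0:ℝ) < ‖x‖ := norm_pos_iff.2 hx0
      have he : x ⬝ᵥ (x : Fin N → ℝ) = ‖x‖ ^ 2 := by rw [← norm_sq_toE]; simp [toE]
      rw [he]; positivity
    have h4 : (0:ℝ) ≤ lammin * (x ⬝ᵥ x) := by rw [← h2]; exact h1
    have h5 : (0:ℝ) ≤ lammin := by
      by_contra hc
      push_neg at hc
      exact absurd h4 (not_le.2 (mul_neg_of_neg_of_pos hc h3))
    exact lt_of_le_of_ne h5 (Ne.symm hne)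
  have hmaxpos : 0 < lammax := lt_of_lt_of_le hminpos (hmax.2 hmin.1.2)
  set w : Fin N → ℝ := vhat - v with hwdef
  set z : Fin M → ℝ := y - y' with hzdef
  -- A w = L z
  have hAw : A *ᵥ w = L *ᵥ z := by
    rw [hwdef, hzdef, mulVec_sub, mulVec_sub]
    show A *ᵥ vhat - A *ᵥ v = _
    rw [heq1, heq2]
  -- coefficients of w on kernel directions vanish
  have hsumw : ∑ k, w k = 0 := by
    have : ∑ k, w k = (∑ k, vhat k) - ∑ k, v k := by
      rw [← Finset.sum_sub_distrib]; rfl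
    rw [this, hv, hvhat, sub_zero]
  have hNpos : 0 < N := by
    obtain ⟨j⟩ := hconn.nonempty
    exact j.pos
  have hconstdot : ∀ (f : Fin N → ℝ), (∀ j k, f j = f k) → f ⬝ᵥ w = 0 := by
    intro f hf
    set j0 : Fin N := ⟨0, hNpos⟩
    have : f ⬝ᵥ w = f j0 * ∑ k, w k := by
      rw [Finset.mul_sum, dotProduct]
      exact Finset.sum_congr rfl fun k _ => by rw [hf k j0]
    rw [this, hsumw, mul_zero]
  have hker : ∀ i, μ i = 0 → b.repr (toE w) i = 0 := by
    intro i hi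
    have h0 : A *ᵥ (fun j => b i j) = 0 := by
      have := hA.mulVec_eigenvectorBasis i
      rw [← hμdef, hi, zero_smul] at this
      exact this
    have hconst : ∀ j k : Fin N, b i j = b i k := by
      have := (G.lapMatrix_mulVec_eq_zero_iff_forall_reachable (x := fun j => b i j)).1
        (by exact h0)
      exact fun j k => this j k (hconn.preconnected j k)
    rw [repr_toE_apply]
    exact hconstdot _ hconst
  -- lower bound : lammin * ‖w‖ ≤ ‖A w‖
  have hlow : lammin * ‖toE w‖ ≤ ‖toE (A *ᵥ w)‖ := by
    have hsq : (lammin * ‖toE w‖) ^ 2 ≤ ‖toE (A *ᵥ w)‖ ^ 2 := by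
      rw [mul_pow, norm_sq_eq_sum_repr hA, norm_sq_eq_sum_repr hA, Finset.mul_sum]
      refine Finset.sum_le_sum fun i _ => ?_
      rw [repr_mulVec hA, mul_pow]
      rcases eq_or_ne (μ i) 0 with h | h
      · rw [hker i h]; simp
      · have h2 : lammin ^ 2 ≤ μ i ^ 2 := pow_le_pow_left₀ hminpos.le (hμmin i h) 2
        exact mul_le_mul_of_nonneg_right h2 (sq_nonneg _)
    have h1 : 0 ≤ lammin * ‖toE w‖ := mul_nonneg hminpos.le (norm_nonneg _)
    have := Real.sqrt_le_sqrt hsq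
    rwa [Real.sqrt_sq h1, Real.sqrt_sq (norm_nonneg _)] at this
  -- Rayleigh upper bound
  have hray : ∀ u : Fin N → ℝ, u ⬝ᵥ (A *ᵥ u) ≤ lammax * ‖toE u‖ ^ 2 := by
    intro u
    have h1 : u ⬝ᵥ (A *ᵥ u) = (inner ℝ (toE u) (toE (A *ᵥ u)) : ℝ) := (inner_toE _ _).symm
    have h2 : (inner ℝ (toE u) (toE (A *ᵥ u)) : ℝ)
        = ∑ i, b.repr (toE u) i * b.repr (toE (A *ᵥ u)) i := by
      rw [← b.repr.inner_map_map (toE u) (toE (A *ᵥ u)), PiLp.inner_apply]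
      simp [mul_comm]
    rw [h1, h2, norm_sq_eq_sum_repr hA, Finset.mul_sum]
    refine Finset.sum_le_sum fun i _ => ?_
    rw [repr_mulVec hA]
    have : b.repr (toE u) i * (μ i * b.repr (toE u) i) = μ i * (b.repr (toE u) i) ^ 2 := by ring
    rw [this]
    exact mul_le_mul_of_nonneg_right (hμmax i) (sq_nonneg _)
  -- ‖L z‖ ≤ sqrt lammax * ‖z‖
  have hLz : ‖toE (L *ᵥ z)‖ ≤ Real.sqrt lammax * ‖toE z‖ := by
    set u : Fin N → ℝ := L *ᵥ z with hudef
    have hnu : ‖toE u‖ ^ 2 = (Lᵀ *ᵥ u) ⬝ᵥ z := by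
      rw [norm_sq_toE, mulVec_transpose, ← dotProduct_mulVec]
    have hns : ‖toE (Lᵀ *ᵥ u)‖ ^ 2 ≤ lammax * ‖toE u‖ ^ 2 := by
      rw [norm_sq_toE]
      have hss : (Lᵀ *ᵥ u) ⬝ᵥ (Lᵀ *ᵥ u) = u ⬝ᵥ (A *ᵥ u) := by
        rw [← hLap, ← mulVec_mulVec, dotProduct_mulVec u, ← mulVec_transpose]
      rw [hss]
      exact hray u
    have hcs : (Lᵀ *ᵥ u) ⬝ᵥ z ≤ ‖toE (Lᵀ *ᵥ u)‖ * ‖toE z‖ := by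
      rw [← inner_toE]; exact real_inner_le_norm _ _
    have hsb : ‖toE (Lᵀ *ᵥ u)‖ ≤ Real.sqrt lammax * ‖toE u‖ := by
      have := Real.sqrt_le_sqrt hns
      rwa [Real.sqrt_mul hmaxpos.le, Real.sqrt_sq (norm_nonneg _),
        Real.sqrt_sq (norm_nonneg _)] at this
    have key : ‖toE u‖ ^ 2 ≤ (Real.sqrt lammax * ‖toE z‖) * ‖toE u‖ := by
      calc ‖toE u‖ ^ 2 = (Lᵀ *ᵥ u) ⬝ᵥ z := hnu
        _ ≤ ‖toE (Lᵀ *ᵥ u)‖ * ‖toE z‖ := hcs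
        _ ≤ (Real.sqrt lammax * ‖toE u‖) * ‖toE z‖ :=
            mul_le_mul_of_nonneg_right hsb (norm_nonneg _)
        _ = (Real.sqrt lammax * ‖toE z‖) * ‖toE u‖ := by ring
    rcases eq_or_lt_of_le (norm_nonneg (toE u)) with h | h
    · rw [← h]; positivity
    · nlinarith [key, h]
  -- ‖z‖ ≤ sqrt M * δ
  have hznorm : ‖toE z‖ ≤ Real.sqrt M * δ := by
    rcases Nat.eq_zero_or_pos M with hM0 | hM0
    · have hz0 : ‖toE z‖ ^ 2 = 0 := by
        rw [norm_sq_toE, dotProduct]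
        apply Finset.sum_eq_zero
        intro e _
        exact absurd e.2 (by omega)
      have : ‖toE z‖ = 0 := sq_eq_zero_iff.1 hz0
      rw [this, hM0]
      simp
    · have hδ0 : 0 ≤ δ := le_trans (abs_nonneg _) (hδ ⟨0, hM0⟩)
      have h1 : ‖toE z‖ ^ 2 ≤ (M : ℝ) * δ ^ 2 := by
        rw [norm_sq_toE, dotProduct]
        calc ∑ e, z e * z e ≤ ∑ _e : Fin M, δ ^ 2 := by
              refine Finset.sum_le_sum fun e _ => ?_
              calc z e * z e = |z e| ^ 2 := by rw [sq_abs]; ring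
                _ ≤ δ ^ 2 := pow_le_pow_left₀ (abs_nonneg _) (hδ e) 2
          _ = (M : ℝ) * δ ^ 2 := by simp [Finset.sum_const, nsmul_eq_mul]
      have := Real.sqrt_le_sqrt h1
      rwa [Real.sqrt_sq (norm_nonneg _), Real.sqrt_mul (Nat.cast_nonneg M),
        Real.sqrt_sq hδ0] at this
  -- assemble
  have hfinal : lammin * ‖toE w‖ ≤ Real.sqrt (lammax * M) * δ := by
    calc lammin * ‖toE w‖ ≤ ‖toE (A *ᵥ w)‖ := hlow
      _ = ‖toE (L *ᵥ z)‖ := by rw [hAw]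
      _ ≤ Real.sqrt lammax * ‖toE z‖ := hLz
      _ ≤ Real.sqrt lammax * (Real.sqrt M * δ) :=
          mul_le_mul_of_nonneg_left hznorm (Real.sqrt_nonneg _)
      _ = Real.sqrt (lammax * M) * δ := by
          rw [Real.sqrt_mul hmaxpos.le]; ring
  have hwn : ‖vhat - v‖ = ‖toE w‖ := by simp [hwdef, toE]
  rw [hwn, le_div_iff₀ hminpos]
  linarith [hfinal]
end
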